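/- Let G be a finite graph with a perfect matching M, and suppose G is the vertex-disjoint union of subgraphs G¹, ..., Gᵏ such that Mⁱ := M ∩ E(Gⁱ) is a perfect matching of Gⁱ for each i (though G may have additional edges between the Gⁱ). Then f(G, M) ≥ Σᵢ f(Gⁱ, Mⁱ). -/

import Mathlib

open SimpleGraph

variable {V : Type*}

/-- `M` is a perfect matching of `G`, given as a set of edges: every vertex is
incident with exactly one edge of `M`. -/
def IsPM (G : SimpleGraph V) (M : Set (Sym2 V)) : Prop :=
  M ⊆ G.edgeSet ∧ ∀ v : V, ∃! e, e ∈ M ∧ v ∈ e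

/-- The set of endpoints of a set of edges. -/
def edgeVerts (C : Set (Sym2 V)) : Set V := {v | ∃ e ∈ C, v ∈ e}

/-- `C` is the edge set of a cycle of `G`: nonempty, every vertex it covers lies on
exactly two of its edges, and it is connected. -/
def IsCycleSet (G : SimpleGraph V) (C : Set (Sym2 V)) : Prop :=
  C ⊆ G.edgeSet ∧ C.Nonempty ∧
    (∀ v ∈ edgeVerts C, {e | e ∈ C ∧ v ∈ e}.ncard = 2) ∧
    ((SimpleGraph.fromEdgeSet C).induce (edgeVerts C)).Connected

/-- `C` is an `M`-alternating cycle: a cycle whose edges lie alternately in the matching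
`M` and outside of it; for a matching this is equivalent to every vertex of `C` being
covered by an edge of `C ∩ M`. -/
def IsAltCycle (G : SimpleGraph V) (M C : Set (Sym2 V)) : Prop :=
  IsCycleSet G C ∧ ∀ v ∈ edgeVerts C, ∃ e ∈ C ∩ M, v ∈ e

/-- `S` is a forcing set of the perfect matching `M`: `S ⊆ M` and `M` is the unique
perfect matching of `G` containing `S`. -/
def IsForcingSet (G : SimpleGraph V) (M S : Set (Sym2 V)) : Prop :=
  S ⊆ M ∧ ∀ M' : Set (Sym2 V), IsPM G M' → S ⊆ M' → M' = M

/-- The forcing number `f(G,M)`: the minimum size of a forcing set of `M`. -/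
noncomputable def forcingNumber (G : SimpleGraph V) (M : Set (Sym2 V)) : ℕ :=
  sInf {n | ∃ S : Set (Sym2 V), IsForcingSet G M S ∧ S.ncard = n}

lemma sym2_lift {P : Set V} {e : Sym2 V} (h : ∀ v ∈ e, v ∈ P) :
    ∃ e' : Sym2 P, Sym2.map Subtype.val e' = e := by
  induction e using Sym2.ind with
  | _ x y =>
    exact ⟨s(⟨x, h x (by simp)⟩, ⟨y, h y (by simp)⟩), by simp⟩

lemma mem_map_image_endpoints {P : Set V} {A : Set (Sym2 P)} {e : Sym2 V}
    (h : e ∈ Sym2.map Subtype.val '' A) : ∀ v ∈ e, v ∈ P := by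
  obtain ⟨e', -, rfl⟩ := h
  intro v hv
  rw [Sym2.mem_map] at hv
  obtain ⟨u, -, rfl⟩ := hv
  exact u.2

lemma pm_forcing_self (G : SimpleGraph V) (M : Set (Sym2 V)) (hM : IsPM G M) :
    IsForcingSet G M M := by
  refine ⟨subset_rfl, fun M' hM' hsub => ?_⟩
  refine Set.Subset.antisymm (fun e he => ?_) hsub
  induction e using Sym2.ind with
  | _ a b =>
    obtain ⟨f, ⟨hfM, hfa⟩, -⟩ := hM.2 a
    have h1 := (hM'.2 a).unique ⟨he, by simp⟩ ⟨hsub hfM, hfa⟩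
    exact h1 ▸ hfM

/-- if the vertex set of `G` is partitioned into classes `P i` such that the
restriction of the perfect matching `M` to each induced subgraph `G[P i]` is a perfect
matching of it, then `f(G,M)` is at least the sum of the forcing numbers of the
restrictions. -/
theorem stmt_3 {V : Type*} [Fintype V] (G : SimpleGraph V) (M : Set (Sym2 V))
    (hM : IsPM G M) (k : ℕ) (P : Fin k → Set V)
    (hdisj : ∀ i j, i ≠ j → Disjoint (P i) (P j)) (hcover : (⋃ i, P i) = Set.univ)
    (hPM : ∀ i, IsPM (G.induce (P i))
      {e : Sym2 (P i) | Sym2.map Subtype.val e ∈ M}) :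
    ∑ i, forcingNumber (G.induce (P i))
        {e : Sym2 (P i) | Sym2.map Subtype.val e ∈ M} ≤ forcingNumber G M := by
  classical
  have hclass : ∀ v : V, ∃ i, v ∈ P i := by
    intro v
    have : v ∈ ⋃ i, P i := hcover ▸ Set.mem_univ v
    exact Set.mem_iUnion.mp this
  -- every edge of M lies within one class
  have hMclass : ∀ e ∈ M, ∃ i, ∀ w ∈ e, w ∈ P i := by
    intro e he
    induction e using Sym2.ind with
    | _ a b =>
      obtain ⟨j, haj⟩ := hclass a
      obtain ⟨e', ⟨he'M, he'a⟩, -⟩ := (hPM j).2 ⟨a, haj⟩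
      have hamem : a ∈ Sym2.map Subtype.val e' :=
        Sym2.mem_map.mpr ⟨⟨a, haj⟩, he'a, rfl⟩
      have heq : s(a, b) = Sym2.map Subtype.val e' :=
        (hM.2 a).unique ⟨he, by simp⟩ ⟨he'M, hamem⟩
      refine ⟨j, fun w hw => ?_⟩
      rw [heq, Sym2.mem_map] at hw
      obtain ⟨u, -, rfl⟩ := hw
      exact u.2
  -- obtain a minimum forcing set S
  have hne : {n | ∃ S : Set (Sym2 V), IsForcingSet G M S ∧ S.ncard = n}.Nonempty :=
    ⟨M.ncard, M, pm_forcing_self G M hM, rfl⟩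
  obtain ⟨S, hSforce, hScard⟩ := Nat.sInf_mem hne
  set Si : ∀ i : Fin k, Set (Sym2 (P i)) :=
    fun i => {e | Sym2.map Subtype.val e ∈ S} with hSi
  set T : Fin k → Set (Sym2 V) := fun i => Sym2.map Subtype.val '' Si i with hT
  have hTS : ∀ i, T i ⊆ S := by
    rintro i e ⟨e', he', rfl⟩
    exact he'
  -- each Si is a forcing set of the restriction
  have hforce : ∀ i, IsForcingSet (G.induce (P i))
      {e : Sym2 (P i) | Sym2.map Subtype.val e ∈ M} (Si i) := by
    intro i
    refine ⟨fun e he => hSforce.1 he, fun M'i hM'i hsub => ?_⟩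
    set M' : Set (Sym2 V) :=
      (Sym2.map Subtype.val '' M'i) ∪ {e ∈ M | ∃ v ∈ e, v ∉ P i} with hM'def
    have hM'PM : IsPM G M' := by
      constructor
      · rintro e (⟨e', he', rfl⟩ | ⟨heM, -⟩)
        · have := hM'i.1 he'
          induction e' using Sym2.ind with
          | _ u w =>
            simpa using this
        · exact hM.1 heM
      · intro v
        by_cases hv : v ∈ P i
        · obtain ⟨e', ⟨he'M, he'v⟩, huniq⟩ := hM'i.2 ⟨v, hv⟩
          refine ⟨Sym2.map Subtype.val e',
            ⟨Or.inl ⟨e', he'M, rfl⟩, Sym2.mem_map.mpr ⟨⟨v, hv⟩, he'v, rfl⟩⟩, ?_⟩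
          rintro f ⟨(⟨f', hf', rfl⟩ | ⟨hfM, w, hwf, hwP⟩), hvf⟩
          · rw [Sym2.mem_map] at hvf
            obtain ⟨u, huf', huval⟩ := hvf
            have : u = ⟨v, hv⟩ := Subtype.ext huval
            subst this
            rw [huniq f' ⟨hf', huf'⟩]
          · obtain ⟨j, hj⟩ := hMclass f hfM
            have hvj : v ∈ P j := hj v hvf
            have hij : j = i := by
              by_contra hne'
              exact (hdisj j i hne').ne_of_mem hvj hv rfl
            exact absurd (hij ▸ hj w hwf) hwP
        · obtain ⟨e, ⟨heM, hev⟩, huniq⟩ := hM.2 v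
          obtain ⟨j, hj⟩ := hMclass e heM
          have hji : j ≠ i := by
            rintro rfl
            exact hv (hj v hev)
          refine ⟨e, ⟨Or.inr ⟨heM, v, hev, hv⟩, hev⟩, ?_⟩
          rintro f ⟨(⟨f', hf', rfl⟩ | ⟨hfM, -⟩), hvf⟩
          · rw [Sym2.mem_map] at hvf
            obtain ⟨u, -, rfl⟩ := hvf
            exact absurd u.2 hv
          · exact huniq f ⟨hfM, hvf⟩
    have hSM' : S ⊆ M' := by
      intro e he
      have heM : e ∈ M := hSforce.1 he
      by_cases h : ∀ w ∈ e, w ∈ P i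
      · obtain ⟨e', rfl⟩ := sym2_lift h
        exact Or.inl ⟨e', hsub he, rfl⟩
      · push_neg at h
        obtain ⟨w, hw1, hw2⟩ := h
        exact Or.inr ⟨heM, w, hw1, hw2⟩
    have hMM' : M' = M := hSforce.2 M' hM'PM hSM'
    ext e'
    constructor
    · intro he'
      have : Sym2.map Subtype.val e' ∈ M' := Or.inl ⟨e', he', rfl⟩
      rw [hMM'] at this
      exact this
    · intro he'
      have : Sym2.map Subtype.val e' ∈ M' := hMM' ▸ he'
      rcases this with ⟨f', hf', hfeq⟩ | ⟨-, v, hv1, hv2⟩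
      · have : f' = e' := Sym2.map.injective Subtype.val_injective hfeq
        exact this ▸ hf'
      · rw [Sym2.mem_map] at hv1
        obtain ⟨u, -, rfl⟩ := hv1
        exact absurd u.2 hv2
  -- forcing number bounds
  have hbound : ∀ i, forcingNumber (G.induce (P i))
      {e : Sym2 (P i) | Sym2.map Subtype.val e ∈ M} ≤ (T i).ncard := by
    intro i
    have : (T i).ncard = (Si i).ncard :=
      Set.ncard_image_of_injective _ (Sym2.map.injective Subtype.val_injective)
    rw [this]
    exact Nat.sInf_le ⟨Si i, hforce i, rfl⟩
  -- T i are pairwise disjoint subsets of S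
  have hTdisj : ∀ i j : Fin k, i ≠ j → Disjoint (T i) (T j) := by
    intro i j hij
    rw [Set.disjoint_left]
    intro e hei hej
    induction e using Sym2.ind with
    | _ a b =>
      have hai : a ∈ P i := mem_map_image_endpoints hei a (by simp)
      have haj : a ∈ P j := mem_map_image_endpoints hej a (by simp)
      exact (hdisj i j hij).ne_of_mem hai haj rfl
  calc ∑ i, forcingNumber (G.induce (P i))
        {e : Sym2 (P i) | Sym2.map Subtype.val e ∈ M}
      ≤ ∑ i, (T i).ncard := Finset.sum_le_sum fun i _ => hbound i
    _ = ∑ i, ((T i).toFinite.toFinset).card := by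
        refine Finset.sum_congr rfl fun i _ => ?_
        exact Set.ncard_eq_toFinset_card _ _
    _ = (Finset.univ.biUnion fun i => (T i).toFinite.toFinset).card := by
        rw [Finset.card_biUnion]
        intro i _ j _ hij
        simp only [Function.onFun]
        rw [Set.Finite.disjoint_toFinset]
        exact hTdisj i j hij
    _ ≤ (S.toFinite.toFinset).card := by
        apply Finset.card_le_card
        intro e he
        rw [Finset.mem_biUnion] at he
        obtain ⟨i, -, hei⟩ := he
        rw [Set.Finite.mem_toFinset] at *
        exact hTS i (by simpa using hei)
    _ = S.ncard := (Set.ncard_eq_toFinset_card S _).symm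
    _ = forcingNumber G M := hScard
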